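/- Let C be a real number with 0 < |C| < 1, let ν ∈ ℝ with 0 ≤ |ν| ≤ |C| and |ν| < 1, and define f_±(ξ) = ν·ξ ± arcsin(C·sin ξ) for ξ ∈ [-π, π]. Then the set of critical points of f_+ in [-π, π] is exactly {arccos(-(ν/C)·√((1-C^2)/(1-ν^2))), -arccos(-(ν/C)·√((1-C^2)/(1-ν^2)))}, the set of critical points of f_- is exactly {arccos((ν/C)·√((1-C^2)/(1-ν^2))), -arccos((ν/C)·√((1-C^2)/(1-ν^2)))}, and at every such critical point ξ_SP the second derivative satisfies |f_±''(ξ_SP)| = (1-C^2)^{-1/2}·(1-ν^2)·√(C^2-ν^2); in particular the critical points are non-degenerate if |ν| < |C| and degenerate if |ν| = |C|. -/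

import Mathlib

open Real

lemma sp_upos {C : ℝ} (hC2 : C^2 < 1) (ξ : ℝ) : 0 < 1 - (C * Real.sin ξ)^2 := by
  have h1 : (C * Real.sin ξ)^2 = C^2 * Real.sin ξ ^2 := by ring
  nlinarith [Real.sin_sq_le_one ξ, sq_nonneg C, sq_nonneg (Real.sin ξ)]

lemma sp_d1 {C : ℝ} (hC2 : C^2 < 1) (ξ : ℝ) :
    HasDerivAt (fun x => Real.arcsin (C * Real.sin x))
      (C * Real.cos ξ / Real.sqrt (1 - (C * Real.sin ξ)^2)) ξ := by
  have hu := sp_upos hC2 ξ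
  have h1 : C * Real.sin ξ ≠ -1 := by nlinarith
  have h2 : C * Real.sin ξ ≠ 1 := by nlinarith
  have h := (Real.hasDerivAt_arcsin h1 h2).comp ξ ((Real.hasDerivAt_sin ξ).const_mul C)
  exact h.congr_deriv (by ring)

lemma sp_d2 {C : ℝ} (hC2 : C^2 < 1) (ξ : ℝ) :
    HasDerivAt (fun x => C * Real.cos x / Real.sqrt (1 - (C * Real.sin x)^2))
      (-(C * Real.sin ξ) * (1 - C^2) / (Real.sqrt (1 - (C * Real.sin ξ)^2))^3) ξ := by
  have hu := sp_upos hC2 ξ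
  have hs0 : Real.sqrt (1 - (C * Real.sin ξ)^2) ≠ 0 := by positivity
  have hn : HasDerivAt (fun x => C * Real.cos x) (-(C * Real.sin ξ)) ξ := by
    simpa [mul_comm] using (Real.hasDerivAt_cos ξ).const_mul C
  have hv : HasDerivAt (fun x => 1 - (C * Real.sin x)^2)
      (-(2 * (C * Real.sin ξ) * (C * Real.cos ξ))) ξ := by
    have := (((Real.hasDerivAt_sin ξ).const_mul C).pow 2).const_sub 1
    exact this.congr_deriv (by push_cast; ring)
  have hd : HasDerivAt (fun x => Real.sqrt (1 - (C * Real.sin x)^2))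
      (-(2 * (C * Real.sin ξ) * (C * Real.cos ξ)) / (2 * Real.sqrt (1 - (C * Real.sin ξ)^2))) ξ :=
    (Real.hasDerivAt_sqrt (ne_of_gt hu)).comp ξ hv |>.congr_deriv (by ring)
  have H := hn.div hd hs0
  refine H.congr_deriv (Eq.symm ?_)
  set s := Real.sqrt (1 - (C * Real.sin ξ)^2) with hsdef
  have hs2 : s^2 = 1 - (C * Real.sin ξ)^2 := Real.sq_sqrt (le_of_lt hu)
  have hcs : Real.cos ξ^2 = 1 - Real.sin ξ^2 := Real.cos_sq' ξ
  field_simp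
  linear_combination (C*Real.sin ξ) * hs2 - (C^3*Real.sin ξ) * hcs

lemma sp_crit_iff {C ν : ℝ} (hC : C ≠ 0) (hC2 : C^2 < 1) (hν2 : ν^2 < 1) (ξ : ℝ) :
    ν + C * Real.cos ξ / Real.sqrt (1 - (C * Real.sin ξ)^2) = 0 ↔
    Real.cos ξ = -(ν / C) * Real.sqrt ((1 - C^2) / (1 - ν^2)) := by
  have hu := sp_upos hC2 ξ
  have hν2' : (0:ℝ) < 1 - ν^2 := by linarith
  have hC2' : (0:ℝ) < 1 - C^2 := by linarith
  have hk : (0:ℝ) < (1 - C^2) / (1 - ν^2) := by positivity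
  have hsk : Real.sqrt ((1 - C^2) / (1 - ν^2)) ^ 2 = (1 - C^2) / (1 - ν^2) :=
    Real.sq_sqrt (le_of_lt hk)
  have hs0 : (0:ℝ) < Real.sqrt (1 - (C * Real.sin ξ)^2) := Real.sqrt_pos.mpr hu
  set s := Real.sqrt (1 - (C * Real.sin ξ)^2) with hsdef
  have hs2 : s^2 = 1 - (C * Real.sin ξ)^2 := Real.sq_sqrt (le_of_lt hu)
  have hpyth : Real.sin ξ^2 = 1 - Real.cos ξ^2 := Real.sin_sq ξ
  have key : ∀ _ : Real.cos ξ^2 * (C^2 * (1 - ν^2)) = ν^2 * (1 - C^2),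
      s = Real.sqrt ((1 - C^2) / (1 - ν^2)) := by
    intro hcos2
    have huval : s^2 = (1 - C^2) / (1 - ν^2) := by
      rw [eq_div_iff (ne_of_gt hν2'), hs2]
      linear_combination (-(C^2*(1-ν^2)))*hpyth + hcos2
    rw [← Real.sqrt_sq (le_of_lt hs0), huval]
  constructor
  · intro h
    have h2 : C * Real.cos ξ = -ν * s := by
      field_simp at h
      linarith
    have hsq : (C * Real.cos ξ)^2 = (-ν * s)^2 := by rw [h2]
    have hcos2 : Real.cos ξ^2 * (C^2 * (1 - ν^2)) = ν^2 * (1 - C^2) := by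
      linear_combination hsq + ν^2*hs2 - (ν^2*C^2)*hpyth
    rw [key hcos2] at h2
    rw [show -(ν/C) * Real.sqrt ((1 - C^2)/(1 - ν^2))
        = (-ν * Real.sqrt ((1 - C^2)/(1 - ν^2)))/C by ring, eq_div_iff hC]
    linear_combination h2
  · intro h
    have hcos2 : Real.cos ξ^2 * (C^2 * (1 - ν^2)) = ν^2 * (1 - C^2) := by
      rw [h, mul_pow, hsk]
      field_simp
    have hsk0 : Real.sqrt ((1 - C^2) / (1 - ν^2)) ≠ 0 := ne_of_gt (Real.sqrt_pos.mpr hk)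
    rw [h]
    field_simp
    have hss : s * Real.sqrt (1 - ν^2) = Real.sqrt (1 - C^2) := by
      rw [key hcos2, ← Real.sqrt_mul (le_of_lt hk), div_mul_cancel₀ _ (ne_of_gt hν2')]
    linear_combination ν * key hcos2

lemma sp_B_sq {C ν : ℝ} (hC2 : C^2 < 1) (hν2 : ν^2 < 1) (ξ : ℝ)
    (hcrit : C^2 * Real.cos ξ^2 = ν^2 * (1 - (C * Real.sin ξ)^2)) :
    (-(C * Real.sin ξ) * (1 - C^2) / (Real.sqrt (1 - (C * Real.sin ξ)^2))^3)^2
      = (C^2 - ν^2) * (1 - ν^2)^2 / (1 - C^2) := by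
  have hu := sp_upos hC2 ξ
  have hν2' : (0:ℝ) < 1 - ν^2 := by linarith
  have hC2' : (0:ℝ) < 1 - C^2 := by linarith
  have hs2 : Real.sqrt (1 - (C * Real.sin ξ)^2) ^ 2 = 1 - (C * Real.sin ξ)^2 :=
    Real.sq_sqrt (le_of_lt hu)
  set s := Real.sqrt (1 - (C * Real.sin ξ)^2) with hsdef
  have hs0 : s ≠ 0 := by positivity
  have hpyth : Real.cos ξ^2 = 1 - Real.sin ξ^2 := Real.cos_sq' ξ
  have hS : C^2 * Real.sin ξ^2 * (1 - ν^2) = C^2 - ν^2 := by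
    linear_combination -hcrit + C^2*hpyth
  have h6 : (s^3)^2 = (1 - (C * Real.sin ξ)^2)^3 := by
    rw [← pow_mul, show (3*2 : ℕ) = 2*3 by rfl, pow_mul, hs2]
  have hu2 : 1 - (C * Real.sin ξ)^2 = (1 - C^2)/(1 - ν^2) := by
    rw [eq_div_iff (ne_of_gt hν2')]
    linear_combination -hS
  rw [div_pow, h6, hu2]
  field_simp
  ring_nf
  linear_combination hS

lemma sp_cos_set {t : ℝ} (ht1 : -1 ≤ t) (ht2 : t ≤ 1) (ξ : ℝ) :
    (ξ ∈ Set.Icc (-Real.pi) Real.pi ∧ Real.cos ξ = t) ↔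
    (ξ = Real.arccos t ∨ ξ = -Real.arccos t) := by
  constructor
  · rintro ⟨⟨h1, h2⟩, hc⟩
    rcases le_or_gt 0 ξ with h | h
    · left
      rw [← hc, Real.arccos_cos h h2]
    · right
      have : Real.arccos t = -ξ := by
        rw [← hc, ← Real.cos_neg, Real.arccos_cos (by linarith) (by linarith)]
      linarith [this]
  · rintro (rfl | rfl)
    · exact ⟨⟨by linarith [Real.arccos_nonneg t, Real.pi_pos], Real.arccos_le_pi t⟩,
        Real.cos_arccos ht1 ht2⟩
    · refine ⟨⟨by simpa using Real.arccos_le_pi t,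
        by linarith [Real.arccos_nonneg t, Real.pi_pos]⟩, ?_⟩
      rw [Real.cos_neg]
      exact Real.cos_arccos ht1 ht2

/-- For `0 < |C| < 1` and `|ν| ≤ |C|`, `|ν| < 1`, the critical points of
`f_±(ξ) = νξ ± arcsin(C sin ξ)` in `[-π, π]` are exactly
`±arccos(∓(ν/C)·√((1-C²)/(1-ν²)))`, and at each such critical point the second
derivative satisfies `|f_±''| = (1-C²)^{-1/2}(1-ν²)√(C²-ν²)`; in particular the critical
points are non-degenerate if `|ν| < |C|` and degenerate if `|ν| = |C|`. -/
theorem saddle_points_of_green_phases (C ν : ℝ) (hC0 : 0 < |C|) (hC1 : |C| < 1)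
    (hν0 : 0 ≤ |ν|) (hν1 : |ν| ≤ |C|) (hν2 : |ν| < 1) :
    let fp : ℝ → ℝ := fun ξ => ν * ξ + Real.arcsin (C * Real.sin ξ)
    let fm : ℝ → ℝ := fun ξ => ν * ξ - Real.arcsin (C * Real.sin ξ)
    let a : ℝ := Real.arccos (-(ν / C) * Real.sqrt ((1 - C ^ 2) / (1 - ν ^ 2)))
    let b : ℝ := Real.arccos ((ν / C) * Real.sqrt ((1 - C ^ 2) / (1 - ν ^ 2)))
    ({ξ ∈ Set.Icc (-Real.pi) Real.pi | deriv fp ξ = 0} = {a, -a}) ∧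
    ({ξ ∈ Set.Icc (-Real.pi) Real.pi | deriv fm ξ = 0} = {b, -b}) ∧
    (∀ ξ ∈ Set.Icc (-Real.pi) Real.pi, deriv fp ξ = 0 →
      |deriv (deriv fp) ξ| = (Real.sqrt (1 - C ^ 2))⁻¹ * (1 - ν ^ 2) * Real.sqrt (C ^ 2 - ν ^ 2)) ∧
    (∀ ξ ∈ Set.Icc (-Real.pi) Real.pi, deriv fm ξ = 0 →
      |deriv (deriv fm) ξ| = (Real.sqrt (1 - C ^ 2))⁻¹ * (1 - ν ^ 2) * Real.sqrt (C ^ 2 - ν ^ 2)) ∧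
    (|ν| < |C| → ∀ ξ ∈ Set.Icc (-Real.pi) Real.pi,
      (deriv fp ξ = 0 → deriv (deriv fp) ξ ≠ 0) ∧ (deriv fm ξ = 0 → deriv (deriv fm) ξ ≠ 0)) ∧
    (|ν| = |C| → ∀ ξ ∈ Set.Icc (-Real.pi) Real.pi,
      (deriv fp ξ = 0 → deriv (deriv fp) ξ = 0) ∧ (deriv fm ξ = 0 → deriv (deriv fm) ξ = 0)) := by
  intro fp fm a b
  have hC : C ≠ 0 := by
    intro h
    simp [h] at hC0
  have hC2 : C^2 < 1 := by
    rw [← sq_abs]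
    nlinarith
  have hν2sq : ν^2 < 1 := by
    rw [← sq_abs]
    nlinarith
  have hνC : ν^2 ≤ C^2 := by
    rw [← sq_abs, ← sq_abs C]
    nlinarith
  have hν2' : (0:ℝ) < 1 - ν^2 := by linarith
  have hC2' : (0:ℝ) < 1 - C^2 := by linarith
  have hk : (0:ℝ) < (1 - C^2) / (1 - ν^2) := by positivity
  have hsk : Real.sqrt ((1 - C^2) / (1 - ν^2)) ^ 2 = (1 - C^2) / (1 - ν^2) :=
    Real.sq_sqrt (le_of_lt hk)
  -- bounds on t
  have ht2 : ((ν/C) * Real.sqrt ((1 - C^2) / (1 - ν^2)))^2 ≤ 1 := by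
    rw [mul_pow, hsk, div_pow]
    rw [div_mul_div_comm, div_le_one (by positivity)]
    nlinarith
  have htb1 : -1 ≤ (ν/C) * Real.sqrt ((1 - C^2) / (1 - ν^2)) := by
    nlinarith [sq_nonneg ((ν/C) * Real.sqrt ((1 - C^2) / (1 - ν^2)) + 1)]
  have htb2 : (ν/C) * Real.sqrt ((1 - C^2) / (1 - ν^2)) ≤ 1 := by
    nlinarith [sq_nonneg ((ν/C) * Real.sqrt ((1 - C^2) / (1 - ν^2)) - 1)]
  have hta1 : -1 ≤ -(ν/C) * Real.sqrt ((1 - C^2) / (1 - ν^2)) := by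
    rw [neg_mul]
    linarith
  have hta2 : -(ν/C) * Real.sqrt ((1 - C^2) / (1 - ν^2)) ≤ 1 := by
    rw [neg_mul]
    linarith
  -- derivative formulas
  have hdp : deriv fp = fun ξ => ν + C * Real.cos ξ / Real.sqrt (1 - (C * Real.sin ξ)^2) := by
    funext ξ
    have h := ((hasDerivAt_id ξ).const_mul ν).add (sp_d1 hC2 ξ)
    simpa [fp, Pi.add_def] using h.deriv
  have hdm : deriv fm = fun ξ => ν - C * Real.cos ξ / Real.sqrt (1 - (C * Real.sin ξ)^2) := by
    funext ξ
    have h := ((hasDerivAt_id ξ).const_mul ν).sub (sp_d1 hC2 ξ)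
    simpa [fm, Pi.sub_def] using h.deriv
  have hddp : deriv (deriv fp)
      = fun ξ => -(C * Real.sin ξ) * (1 - C^2) / (Real.sqrt (1 - (C * Real.sin ξ)^2))^3 := by
    rw [hdp]
    funext ξ
    exact ((sp_d2 hC2 ξ).const_add ν).deriv
  have hddm : deriv (deriv fm)
      = fun ξ => -(-(C * Real.sin ξ) * (1 - C^2) / (Real.sqrt (1 - (C * Real.sin ξ)^2))^3) := by
    rw [hdm]
    funext ξ
    have h := ((sp_d2 hC2 ξ).const_sub ν)
    simpa [neg_div] using h.deriv
  -- critical equation implies hcrit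
  have hcrit_of : ∀ ξ : ℝ, (C * Real.cos ξ / Real.sqrt (1 - (C * Real.sin ξ)^2))^2 = ν^2 →
      C^2 * Real.cos ξ^2 = ν^2 * (1 - (C * Real.sin ξ)^2) := by
    intro ξ h
    have hu := sp_upos hC2 ξ
    have hs2 : Real.sqrt (1 - (C * Real.sin ξ)^2) ^ 2 = 1 - (C * Real.sin ξ)^2 :=
      Real.sq_sqrt (le_of_lt hu)
    rw [div_pow, hs2, div_eq_iff (ne_of_gt hu)] at h
    linear_combination h
  -- the |f''| value at critical points
  have habs : ∀ ξ : ℝ, C^2 * Real.cos ξ^2 = ν^2 * (1 - (C * Real.sin ξ)^2) →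
      |(-(C * Real.sin ξ) * (1 - C^2) / (Real.sqrt (1 - (C * Real.sin ξ)^2))^3)|
        = (Real.sqrt (1 - C ^ 2))⁻¹ * (1 - ν ^ 2) * Real.sqrt (C ^ 2 - ν ^ 2) := by
    intro ξ hcrit
    have hR0 : (0:ℝ) ≤ (Real.sqrt (1 - C ^ 2))⁻¹ * (1 - ν ^ 2) * Real.sqrt (C ^ 2 - ν ^ 2) := by
      positivity
    have hR2 : ((Real.sqrt (1 - C ^ 2))⁻¹ * (1 - ν ^ 2) * Real.sqrt (C ^ 2 - ν ^ 2))^2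
        = (C^2 - ν^2) * (1 - ν^2)^2 / (1 - C^2) := by
      rw [mul_pow, mul_pow, inv_pow, Real.sq_sqrt (by linarith : (0:ℝ) ≤ 1 - C^2),
        Real.sq_sqrt (by linarith : (0:ℝ) ≤ C^2 - ν^2)]
      ring
    rw [← Real.sqrt_sq_eq_abs, sp_B_sq hC2 hν2sq ξ hcrit, ← hR2, Real.sqrt_sq hR0]
  -- part 3
  have part3 : ∀ ξ ∈ Set.Icc (-Real.pi) Real.pi, deriv fp ξ = 0 →
      |deriv (deriv fp) ξ| = (Real.sqrt (1 - C ^ 2))⁻¹ * (1 - ν ^ 2) * Real.sqrt (C ^ 2 - ν ^ 2) := by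
    intro ξ _ h0
    rw [hdp] at h0
    simp only at h0
    have hcrit := hcrit_of ξ (by rw [show C * Real.cos ξ / Real.sqrt (1 - (C * Real.sin ξ)^2) = -ν by linarith]; ring)
    rw [hddp]
    exact habs ξ hcrit
  have part4 : ∀ ξ ∈ Set.Icc (-Real.pi) Real.pi, deriv fm ξ = 0 →
      |deriv (deriv fm) ξ| = (Real.sqrt (1 - C ^ 2))⁻¹ * (1 - ν ^ 2) * Real.sqrt (C ^ 2 - ν ^ 2) := by
    intro ξ _ h0
    rw [hdm] at h0
    simp only at h0
    have hcrit := hcrit_of ξ (by rw [show C * Real.cos ξ / Real.sqrt (1 - (C * Real.sin ξ)^2) = ν by linarith])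
    rw [hddm]
    simp only [abs_neg]
    exact habs ξ hcrit
  refine ⟨?_, ?_, part3, part4, ?_, ?_⟩
  · ext ξ
    simp only [Set.mem_setOf_eq, Set.mem_insert_iff, Set.mem_singleton_iff, hdp]
    rw [sp_crit_iff hC hC2 hν2sq]
    exact sp_cos_set hta1 hta2 ξ
  · ext ξ
    simp only [Set.mem_setOf_eq, Set.mem_insert_iff, Set.mem_singleton_iff, hdm]
    have hiff : (ν - C * Real.cos ξ / Real.sqrt (1 - (C * Real.sin ξ)^2) = 0)
        ↔ ((-ν) + C * Real.cos ξ / Real.sqrt (1 - (C * Real.sin ξ)^2) = 0) := by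
      constructor <;> intro h <;> linarith
    rw [hiff, sp_crit_iff hC hC2 (by simpa using hν2sq)]
    have : -((-ν) / C) * Real.sqrt ((1 - C^2) / (1 - (-ν)^2))
        = (ν/C) * Real.sqrt ((1 - C^2) / (1 - ν^2)) := by
      rw [neg_sq]
      ring
    rw [this]
    exact sp_cos_set htb1 htb2 ξ
  · intro hlt ξ hξ
    have hCν : ν^2 < C^2 := by
      rw [← sq_abs, ← sq_abs C]
      nlinarith
    have hRpos : (0:ℝ) < (Real.sqrt (1 - C ^ 2))⁻¹ * (1 - ν ^ 2) * Real.sqrt (C ^ 2 - ν ^ 2) := by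
      have h1 : (0:ℝ) < C^2 - ν^2 := by linarith
      positivity
    constructor
    · intro h0
      have := part3 ξ hξ h0
      intro hz
      rw [hz, abs_zero] at this
      linarith
    · intro h0
      have := part4 ξ hξ h0
      intro hz
      rw [hz, abs_zero] at this
      linarith
  · intro heq ξ hξ
    have hCν : C^2 - ν^2 = 0 := by
      have h := congrArg (fun x => x^2) heq
      simp only [sq_abs] at h
      linarith
    have hR0 : (Real.sqrt (1 - C ^ 2))⁻¹ * (1 - ν ^ 2) * Real.sqrt (C ^ 2 - ν ^ 2) = 0 := by
      rw [hCν, Real.sqrt_zero, mul_zero]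
    constructor
    · intro h0
      have := part3 ξ hξ h0
      rw [hR0] at this
      exact abs_eq_zero.mp this
    · intro h0
      have := part4 ξ hξ h0
      rw [hR0] at this
      exact abs_eq_zero.mp this
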